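/- Let H be a real Hilbert space, f: H → ℝ ∪ {+∞} proper, lsc, convex, and suppose (xᵢ, vᵢ) ∈ graph ∂f for i = 0,1 satisfy ⟨v₀ - v₁, x₀ - x₁⟩ = 0. Then f is affine on the segment [x₀, x₁], and [v₀, v₁] ⊆ ∂f(x) for every x ∈ [x₀, x₁]; in particular [x₀, x₁] ⊆ dom ∂f. -/
import Mathlib


open scoped InnerProductSpace

variable {H : Type*} [NormedAddCommGroup H] [InnerProductSpace ℝ H] [CompleteSpace H]

/-- `f` is proper: not identically `⊤` and never `⊥`. -/
def IsProperFn (f : H → EReal) : Prop := (∃ x, f x ≠ ⊤) ∧ ∀ x, f x ≠ ⊥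

/-- `f` is convex (as an extended-real-valued function). -/
def IsConvexFn (f : H → EReal) : Prop :=
  ∀ x y : H, ∀ t : ℝ, 0 < t → t < 1 →
    f ((1 - t) • x + t • y) ≤ ((1 - t : ℝ) : EReal) * f x + ((t : ℝ) : EReal) * f y

/-- `f` is strictly convex on the set `s`. -/
def StrictConvexOnSet (f : H → EReal) (s : Set H) : Prop :=
  ∀ x ∈ s, ∀ y ∈ s, x ≠ y → ∀ t : ℝ, 0 < t → t < 1 →
    f ((1 - t) • x + t • y) < ((1 - t : ℝ) : EReal) * f x + ((t : ℝ) : EReal) * f y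

/-- The effective domain of `f`. -/
def domFn (f : H → EReal) : Set H := {x | f x ≠ ⊤}

/-- `f` is strictly convex (on its domain). -/
def IsStrictConvexFn (f : H → EReal) : Prop := StrictConvexOnSet f (domFn f)

/-- The convex subdifferential of `f` at `x`. -/
def subdiff (f : H → EReal) (x : H) : Set H :=
  {v | ∀ y : H, f x + ((⟪v, y - x⟫_ℝ : ℝ) : EReal) ≤ f y}

/-- The domain of the subdifferential. -/
def domSubdiff (f : H → EReal) : Set H := {x | (subdiff f x).Nonempty}

/-- `f` is almost strictly convex: strictly convex along every line segment in `dom ∂f`. -/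
def AlmostStrictlyConvex (f : H → EReal) : Prop :=
  ∀ x₀ x₁ : H, x₀ ≠ x₁ → segment ℝ x₀ x₁ ⊆ domSubdiff f →
    StrictConvexOnSet f (segment ℝ x₀ x₁)

/-- `∂f` is strictly monotone. -/
def StrictlyMonotoneSubdiff (f : H → EReal) : Prop :=
  ∀ x₀ x₁ v₀ v₁ : H, v₀ ∈ subdiff f x₀ → v₁ ∈ subdiff f x₁ → x₀ ≠ x₁ →
    0 < ⟪v₀ - v₁, x₀ - x₁⟫_ℝ

theorem stmt11 (f : H → EReal) (hp : IsProperFn f) (hlsc : LowerSemicontinuous f)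
    (hc : IsConvexFn f) (x₀ x₁ v₀ v₁ : H)
    (hv₀ : v₀ ∈ subdiff f x₀) (hv₁ : v₁ ∈ subdiff f x₁)
    (horth : ⟪v₀ - v₁, x₀ - x₁⟫_ℝ = 0) :
    (∀ t : ℝ, 0 ≤ t → t ≤ 1 →
      f ((1 - t) • x₀ + t • x₁) = ((1 - t : ℝ) : EReal) * f x₀ + ((t : ℝ) : EReal) * f x₁) ∧
    (∀ x ∈ segment ℝ x₀ x₁, segment ℝ v₀ v₁ ⊆ subdiff f x) ∧
    segment ℝ x₀ x₁ ⊆ domSubdiff f := by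
  obtain ⟨⟨z, hz⟩, hbot⟩ := hp
  have hx₀t : f x₀ ≠ ⊤ := by
    intro h
    have h2 := hv₀ z
    rw [h] at h2
    rw [EReal.top_add_of_ne_bot (by exact_mod_cast EReal.coe_ne_bot _)] at h2
    exact hz (top_le_iff.mp h2)
  have hx₁t : f x₁ ≠ ⊤ := by
    intro h
    have h2 := hv₁ z
    rw [h] at h2
    rw [EReal.top_add_of_ne_bot (by exact_mod_cast EReal.coe_ne_bot _)] at h2
    exact hz (top_le_iff.mp h2)
  set r₀ := (f x₀).toReal with hr₀def
  set r₁ := (f x₁).toReal with hr₁def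
  have hr₀ : f x₀ = (r₀ : EReal) := (EReal.coe_toReal hx₀t (hbot x₀)).symm
  have hr₁ : f x₁ = (r₁ : EReal) := (EReal.coe_toReal hx₁t (hbot x₁)).symm
  have key₀ : ∀ y, ((r₀ + ⟪v₀, y - x₀⟫_ℝ : ℝ) : EReal) ≤ f y := by
    intro y
    have h2 := hv₀ y
    rw [hr₀] at h2
    rw [EReal.coe_add]
    exact h2
  have key₁ : ∀ y, ((r₁ + ⟪v₁, y - x₁⟫_ℝ : ℝ) : EReal) ≤ f y := by
    intro y
    have h2 := hv₁ y
    rw [hr₁] at h2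
    rw [EReal.coe_add]
    exact h2
  have h01 : r₀ + ⟪v₀, x₁ - x₀⟫_ℝ ≤ r₁ := by
    have h2 := key₀ x₁
    rw [hr₁] at h2
    exact_mod_cast h2
  have h10 : r₁ + ⟪v₁, x₀ - x₁⟫_ℝ ≤ r₀ := by
    have h2 := key₁ x₀
    rw [hr₀] at h2
    exact_mod_cast h2
  have hsum : ⟪v₀, x₁ - x₀⟫_ℝ + ⟪v₁, x₀ - x₁⟫_ℝ = 0 := by
    have hexp : ⟪v₀ - v₁, x₀ - x₁⟫_ℝ = -⟪v₀, x₁ - x₀⟫_ℝ - ⟪v₁, x₀ - x₁⟫_ℝ := by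
      simp only [inner_sub_left, inner_sub_right]
      ring
    rw [hexp] at horth
    linarith
  have hc₀ : ⟪v₀, x₁ - x₀⟫_ℝ = r₁ - r₀ := by linarith
  have hc₁ : ⟪v₁, x₀ - x₁⟫_ℝ = r₀ - r₁ := by linarith
  have haff : ∀ t : ℝ, 0 ≤ t → t ≤ 1 →
      f ((1 - t) • x₀ + t • x₁) = (((1 - t) * r₀ + t * r₁ : ℝ) : EReal) := by
    intro t ht0 ht1
    have hpt : ((1 - t) • x₀ + t • x₁) - x₀ = t • (x₁ - x₀) := by module
    have hinner : ⟪v₀, ((1 - t) • x₀ + t • x₁) - x₀⟫_ℝ = t * (r₁ - r₀) := by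
      rw [hpt, inner_smul_right, hc₀]
    have hlow : (((1 - t) * r₀ + t * r₁ : ℝ) : EReal) ≤ f ((1 - t) • x₀ + t • x₁) := by
      have h2 := key₀ ((1 - t) • x₀ + t • x₁)
      rw [hinner] at h2
      have : (1 - t) * r₀ + t * r₁ = r₀ + t * (r₁ - r₀) := by ring
      rw [this]
      exact h2
    have hup : f ((1 - t) • x₀ + t • x₁) ≤ (((1 - t) * r₀ + t * r₁ : ℝ) : EReal) := by
      rcases eq_or_lt_of_le ht0 with h0 | h0
      · rw [← h0]
        simp [hr₀]
      rcases eq_or_lt_of_le ht1 with h1 | h1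
      · rw [h1]
        simp [hr₁]
      · have h2 := hc x₀ x₁ t h0 h1
        rw [hr₀, hr₁, ← EReal.coe_mul, ← EReal.coe_mul, ← EReal.coe_add] at h2
        exact h2
    exact le_antisymm hup hlow
  have hmem : ∀ t : ℝ, 0 ≤ t → t ≤ 1 →
      v₀ ∈ subdiff f ((1 - t) • x₀ + t • x₁) ∧ v₁ ∈ subdiff f ((1 - t) • x₀ + t • x₁) := by
    intro t ht0 ht1
    have hfx := haff t ht0 ht1
    constructor
    · intro y
      rw [hfx, ← EReal.coe_add]
      have hd : y - ((1 - t) • x₀ + t • x₁) = (y - x₀) - t • (x₁ - x₀) := by module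
      have hin : ⟪v₀, y - ((1 - t) • x₀ + t • x₁)⟫_ℝ = ⟪v₀, y - x₀⟫_ℝ - t * (r₁ - r₀) := by
        rw [hd, inner_sub_right, inner_smul_right, hc₀]
      rw [hin]
      have heq : (1 - t) * r₀ + t * r₁ + (⟪v₀, y - x₀⟫_ℝ - t * (r₁ - r₀))
          = r₀ + ⟪v₀, y - x₀⟫_ℝ := by ring
      rw [heq]
      exact key₀ y
    · intro y
      rw [hfx, ← EReal.coe_add]
      have hd : y - ((1 - t) • x₀ + t • x₁) = (y - x₁) - (1 - t) • (x₀ - x₁) := by module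
      have hin : ⟪v₁, y - ((1 - t) • x₀ + t • x₁)⟫_ℝ
          = ⟪v₁, y - x₁⟫_ℝ - (1 - t) * (r₀ - r₁) := by
        rw [hd, inner_sub_right, inner_smul_right, hc₁]
      rw [hin]
      have heq : (1 - t) * r₀ + t * r₁ + (⟪v₁, y - x₁⟫_ℝ - (1 - t) * (r₀ - r₁))
          = r₁ + ⟪v₁, y - x₁⟫_ℝ := by ring
      rw [heq]
      exact key₁ y
  refine ⟨?_, ?_, ?_⟩
  · intro t ht0 ht1
    rw [haff t ht0 ht1, hr₀, hr₁, ← EReal.coe_mul, ← EReal.coe_mul, ← EReal.coe_add]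
  · rintro x ⟨a, b, ha, hb, hab, rfl⟩ v ⟨c, d, hcg, hdg, hcd, rfl⟩
    have ha' : a = 1 - b := by linarith
    subst ha'
    have hb1 : b ≤ 1 := by linarith
    obtain ⟨m₀, m₁⟩ := hmem b hb hb1
    intro y
    have A := m₀ y
    have B := m₁ y
    rw [haff b hb hb1, ← EReal.coe_add] at A B ⊢
    set x := (1 - b) • x₀ + b • x₁
    set m := (1 - b) * r₀ + b * r₁ with hm
    have hin : ⟪c • v₀ + d • v₁, y - x⟫_ℝ = c * ⟪v₀, y - x⟫_ℝ + d * ⟪v₁, y - x⟫_ℝ := by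
      simp [inner_add_left, real_inner_smul_left]
    rw [hin]
    set A' := ⟪v₀, y - x⟫_ℝ
    set B' := ⟪v₁, y - x⟫_ℝ
    have hcomb : m + (c * A' + d * B') = c * (m + A') + d * (m + B') := by
      linear_combination (-m) * hcd
    rw [hcomb]
    rcases le_total (m + A') (m + B') with h | h
    · have hle : c * (m + A') + d * (m + B') ≤ m + B' := by
        have h1 : c * (m + A') ≤ c * (m + B') := mul_le_mul_of_nonneg_left h hcg
        have h2 : c * (m + B') + d * (m + B') = m + B' := by linear_combination (m + B') * hcd
        linarith
      exact le_trans (EReal.coe_le_coe_iff.mpr hle) B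
    · have hle : c * (m + A') + d * (m + B') ≤ m + A' := by
        have h1 : d * (m + B') ≤ d * (m + A') := mul_le_mul_of_nonneg_left h hdg
        have h2 : c * (m + A') + d * (m + A') = m + A' := by linear_combination (m + A') * hcd
        linarith
      exact le_trans (EReal.coe_le_coe_iff.mpr hle) A
  · rintro x ⟨a, b, ha, hb, hab, rfl⟩
    have ha' : a = 1 - b := by linarith
    subst ha'
    exact ⟨v₀, (hmem b hb (by linarith)).1⟩
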